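/- There exists a pair of orthogonal 9-cycle systems of order 27: two partitions of the edge set of the complete graph K_27 into cycles of length 9 such that any cycle of the first partition and any cycle of the second partition share at most one edge. -/

import Mathlib

/-- A set of edges `C` forms a cycle of length `l`: there is a graph and a closed walk
which is a cycle, has length `l`, and whose edge set is exactly `C`. -/
def IsCycleEdgeSet {V : Type*} (l : ℕ) (C : Set (Sym2 V)) : Prop :=
  ∃ (G : SimpleGraph V) (x : V) (w : G.Walk x x),
    w.IsCycle ∧ w.length = l ∧ C = {e | e ∈ w.edges}

/-- `D` is a decomposition of the edge set of `G` into cycles of length `l`: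
each member of `D` is the edge set of an `l`-cycle contained in `G`, and every
edge of `G` lies in exactly one member of `D`. -/
def IsCycleDecomposition {V : Type*} (G : SimpleGraph V) (l : ℕ)
    (D : Set (Set (Sym2 V))) : Prop :=
  (∀ C ∈ D, IsCycleEdgeSet l C ∧ C ⊆ G.edgeSet) ∧
  (∀ e ∈ G.edgeSet, ∃! C, C ∈ D ∧ e ∈ C)

/-- Two cycle decompositions are orthogonal if any member of the first and any member
of the second share at most one edge. -/
def OrthogonalDecompositions {V : Type*} (D₁ D₂ : Set (Set (Sym2 V))) : Prop :=
  ∀ C₁ ∈ D₁, ∀ C₂ ∈ D₂, (C₁ ∩ C₂).Subsingleton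

/-- The set-of-edge-sets associated to a list of edge lists. -/
def Dof (L : List (List (Sym2 (Fin 27)))) : Set (Set (Sym2 (Fin 27))) :=
  {S | ∃ l ∈ L, S = {e | e ∈ l}}

lemma nineCycle {V : Type*} (a b c d e f g h i : V)
    (h1 : ([s(a,b), s(b,c), s(c,d), s(d,e), s(e,f), s(f,g), s(g,h), s(h,i), s(i,a)] :
      List (Sym2 V)).Nodup)
    (h2 : ([a,b,c,d,e,f,g,h,i] : List V).Nodup) :
    IsCycleEdgeSet 9
      {x | x ∈ ([s(a,b), s(b,c), s(c,d), s(d,e), s(e,f), s(f,g), s(g,h), s(h,i), s(i,a)] :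
        List (Sym2 V))} := by
  simp only [List.nodup_cons, List.mem_cons, List.not_mem_nil, or_false, not_or,
    List.nodup_nil, and_true] at h2
  obtain ⟨⟨hab, hac, had, hae, haf, hag, hah, hai⟩, ⟨hbc, hbd, hbe, hbf, hbg, hbh, hbi⟩,
    ⟨hcd, hce, hcf, hcg, hch, hci⟩, ⟨hde, hdf, hdg, hdh, hdi⟩, ⟨hef, heg, heh, hei⟩,
    ⟨hfg, hfh, hfi⟩, ⟨hgh, hgi⟩, hhi, -⟩ := h2
  refine ⟨⊤, a,
    .cons ((SimpleGraph.top_adj _ _).mpr hab) (.cons ((SimpleGraph.top_adj _ _).mpr hbc)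
      (.cons ((SimpleGraph.top_adj _ _).mpr hcd) (.cons ((SimpleGraph.top_adj _ _).mpr hde)
      (.cons ((SimpleGraph.top_adj _ _).mpr hef) (.cons ((SimpleGraph.top_adj _ _).mpr hfg)
      (.cons ((SimpleGraph.top_adj _ _).mpr hgh) (.cons ((SimpleGraph.top_adj _ _).mpr hhi)
      (.cons ((SimpleGraph.top_adj _ _).mpr (Ne.symm hai)) .nil)))))))), ?_, by simp, ?_⟩
  · rw [SimpleGraph.Walk.isCycle_def]
    refine ⟨SimpleGraph.Walk.IsTrail.mk ?_, by simp, ?_⟩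
    · simpa [SimpleGraph.Walk.edges] using h1
    · simp only [SimpleGraph.Walk.support_cons, SimpleGraph.Walk.support_nil, List.tail_cons]
      simp [List.nodup_cons, hab, hbc, hcd, hde, hef, hfg, hgh, hhi, hbi, hci, hdi, hei, hfi,
        hgi, hac, had, hae, haf, hag, hah, hbd, hbe, hbf, hbg, hbh, hce, hcf, hcg, hch,
        hdf, hdg, hdh, heg, heh, hfh, Ne.symm hab, Ne.symm hbc, Ne.symm hcd, Ne.symm hde,
        Ne.symm hef, Ne.symm hfg, Ne.symm hgh, Ne.symm hhi, Ne.symm hac, Ne.symm hbd,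
        Ne.symm hce, Ne.symm hdf, Ne.symm heg, Ne.symm hfh, Ne.symm hgi, Ne.symm had,
        Ne.symm hbe, Ne.symm hcf, Ne.symm hdg, Ne.symm heh, Ne.symm hfi, Ne.symm hae,
        Ne.symm hbf, Ne.symm hcg, Ne.symm hdh, Ne.symm hei, Ne.symm haf, Ne.symm hbg,
        Ne.symm hch, Ne.symm hdi, Ne.symm hag, Ne.symm hbh, Ne.symm hci, Ne.symm hah,
        Ne.symm hbi, Ne.symm hai]
  · ext x
    simp [SimpleGraph.Walk.edges]

lemma dec_of (L : List (List (Sym2 (Fin 27))))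
    (hcyc : ∀ l ∈ L, IsCycleEdgeSet 9 {e | e ∈ l})
    (hdiag : ∀ l ∈ L, ∀ e ∈ l, ¬ e.IsDiag)
    (hcov : ∀ x y : Fin 27, x ≠ y → ∃ l ∈ L, s(x,y) ∈ l)
    (huniq : ∀ l₁ ∈ L, ∀ l₂ ∈ L, ∀ e, e ∈ l₁ → e ∈ l₂ →
      {x | x ∈ l₁} = ({x | x ∈ l₂} : Set (Sym2 (Fin 27)))) :
    IsCycleDecomposition (⊤ : SimpleGraph (Fin 27)) 9 (Dof L) := by
  constructor
  · rintro C ⟨l, hl, rfl⟩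
    refine ⟨hcyc l hl, ?_⟩
    intro e he
    rw [SimpleGraph.edgeSet_top, Set.mem_compl_iff, Sym2.mem_diagSet]
    exact hdiag l hl e he
  · intro e he
    rw [SimpleGraph.edgeSet_top, Set.mem_compl_iff, Sym2.mem_diagSet] at he
    induction e with
    | _ x y =>
      rw [Sym2.isDiag_iff_proj_eq] at he
      obtain ⟨l, hl, hel⟩ := hcov x y he
      refine ⟨{e | e ∈ l}, ⟨⟨l, hl, rfl⟩, hel⟩, ?_⟩
      rintro C ⟨⟨l', hl', rfl⟩, hel'⟩
      exact huniq l' hl' l hl _ hel' hel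

lemma orth_of (L₁ L₂ : List (List (Sym2 (Fin 27))))
    (h : ∀ l₁ ∈ L₁, ∀ l₂ ∈ L₂, ∀ e₁ ∈ l₁, e₁ ∈ l₂ → ∀ e₂ ∈ l₁, e₂ ∈ l₂ → e₁ = e₂) :
    OrthogonalDecompositions (Dof L₁) (Dof L₂) := by
  rintro C₁ ⟨l₁, hl₁, rfl⟩ C₂ ⟨l₂, hl₂, rfl⟩ e₁ ⟨he₁, he₁'⟩ e₂ ⟨he₂, he₂'⟩
  exact h l₁ hl₁ l₂ hl₂ e₁ he₁ he₁' e₂ he₂ he₂'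

/-- Encode an edge of `K₂₇` as a natural number. -/
def enc : Sym2 (Fin 27) → ℕ :=
  Sym2.lift ⟨fun a b => if a.val ≤ b.val then 27 * a.val + b.val else 27 * b.val + a.val,
    by
      intro a b
      dsimp only
      by_cases h : a.val ≤ b.val <;> by_cases h' : b.val ≤ a.val <;> simp [h, h'] <;> omega⟩

lemma enc_mk (x y : Fin 27) :
    enc s(x,y) = if x.val ≤ y.val then 27 * x.val + y.val else 27 * y.val + x.val := by
  simp [enc]

lemma enc_inj : Function.Injective enc := by
  intro e e'
  induction e using Sym2.ind with
  | _ x y =>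
    induction e' using Sym2.ind with
    | _ z w =>
      intro h
      rw [enc_mk, enc_mk] at h
      have hx := x.isLt; have hy := y.isLt; have hz := z.isLt; have hw := w.isLt
      rw [Sym2.eq_iff]
      by_cases h1 : x.val ≤ y.val <;> by_cases h2 : z.val ≤ w.val <;> simp [h1, h2] at h <;>
        first
          | exact Or.inl ⟨Fin.ext (by omega), Fin.ext (by omega)⟩
          | exact Or.inr ⟨Fin.ext (by omega), Fin.ext (by omega)⟩

lemma mem_enc {e : Sym2 (Fin 27)} {l : List (Sym2 (Fin 27))} :
    e ∈ l ↔ enc e ∈ l.map enc :=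
  (List.mem_map_of_injective enc_inj).symm

/-- Bitmask of a list of naturals. -/
def maskOf (l : List ℕ) : ℕ := l.foldr (fun e m => m ||| (1 <<< e)) 0

lemma testBit_maskOf (l : List ℕ) (x : ℕ) : (maskOf l).testBit x = true ↔ x ∈ l := by
  induction l with
  | nil => simp [maskOf, Nat.zero_testBit]
  | cons e t ih =>
    simp only [maskOf, List.foldr_cons] at ih ⊢
    rw [Nat.testBit_or, List.mem_cons]
    simp only [Nat.testBit_shiftLeft, Bool.or_eq_true, Bool.and_eq_true, decide_eq_true_eq,
      Nat.testBit_one_eq_true_iff_self_eq_zero, ih]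
    constructor
    · rintro (h | ⟨h1, h2⟩)
      · exact Or.inr h
      · exact Or.inl (by omega)
    · rintro (rfl | h)
      · exact Or.inr ⟨le_refl _, by omega⟩
      · exact Or.inl h

/-- Bitmask of an edge list. -/
def encMask (l : List (Sym2 (Fin 27))) : ℕ := maskOf (l.map enc)

lemma mem_encMask {e : Sym2 (Fin 27)} {l : List (Sym2 (Fin 27))} :
    e ∈ l ↔ (encMask l).testBit (enc e) = true := by
  rw [mem_enc, encMask, testBit_maskOf]

lemma and_pred_unique {t i j : ℕ} (h : t &&& (t - 1) = 0)
    (hi : t.testBit i = true) (hj : t.testBit j = true) : i = j := by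
  by_contra hne
  wlog hij : i < j generalizing i j
  · exact this hj hi (Ne.symm hne) (by omega)
  have hmlt : t % 2 ^ j < 2 ^ j := Nat.mod_lt _ (Nat.two_pow_pos j)
  have h1 : 1 ≤ t % 2 ^ j := by
    have hb : (t % 2 ^ j).testBit i = true := by
      simpa [Nat.testBit_mod_two_pow, hij] using hi
    calc 1 ≤ 2 ^ i := Nat.one_le_two_pow
    _ ≤ t % 2 ^ j := Nat.ge_two_pow_of_testBit hb
  have hdm : 2 ^ j * (t / 2 ^ j) + t % 2 ^ j = t := Nat.div_add_mod t (2 ^ j)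
  have hbt : t.testBit j = (t / 2 ^ j).testBit 0 := by
    conv_lhs => rw [← hdm]
    rw [Nat.testBit_two_pow_mul_add _ hmlt j]
    simp
  have hbt1 : (t - 1).testBit j = (t / 2 ^ j).testBit 0 := by
    have hdm' : t - 1 = 2 ^ j * (t / 2 ^ j) + (t % 2 ^ j - 1) := by omega
    rw [hdm', Nat.testBit_two_pow_mul_add _ (by omega) j]
    simp
  have hc : (t &&& (t - 1)).testBit j = true := by
    rw [Nat.testBit_and, hj, hbt1, ← hbt, hj]
    rfl
  rw [h] at hc
  simp [Nat.zero_testBit] at hc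

lemma testBit_foldr_or (M : List ℕ) (x : ℕ) :
    (M.foldr (· ||| ·) 0).testBit x = true ↔ ∃ m ∈ M, m.testBit x = true := by
  induction M with
  | nil => simp [Nat.zero_testBit]
  | cons a t ih => simp [Nat.testBit_or, ih]

lemma cov_transfer (L : List (List (Sym2 (Fin 27)))) (M : List ℕ) (full : ℕ)
    (hM : L.map encMask = M) (hfold : M.foldr (· ||| ·) 0 = full)
    (h : ∀ a b : Fin 27, a.val < b.val → full.testBit (27 * a.val + b.val) = true) :
    ∀ x y : Fin 27, x ≠ y → ∃ l ∈ L, s(x,y) ∈ l := by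
  have key : ∀ x y : Fin 27, x.val < y.val → ∃ l ∈ L, s(x,y) ∈ l := by
    intro x y hxy
    have hb := h x y hxy
    rw [← hfold, testBit_foldr_or] at hb
    obtain ⟨m, hm, hbit⟩ := hb
    rw [← hM] at hm
    obtain ⟨l, hl, rfl⟩ := List.mem_map.mp hm
    refine ⟨l, hl, ?_⟩
    rw [mem_encMask, enc_mk, if_pos (le_of_lt hxy)]
    exact hbit
  intro x y hxy
  rcases Nat.lt_or_ge x.val y.val with hlt | hge
  · exact key x y hlt
  · have hlt : y.val < x.val := lt_of_le_of_ne hge (by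
      intro hc
      exact hxy (Fin.ext hc.symm))
    obtain ⟨l, hl, hm⟩ := key y x hlt
    exact ⟨l, hl, by rwa [Sym2.eq_swap]⟩

lemma uniq_transfer (L : List (List (Sym2 (Fin 27)))) (M : List ℕ)
    (hM : L.map encMask = M)
    (h : M.Pairwise (fun a b => a &&& b = 0)) :
    ∀ l₁ ∈ L, ∀ l₂ ∈ L, ∀ e, e ∈ l₁ → e ∈ l₂ →
      {x | x ∈ l₁} = ({x | x ∈ l₂} : Set (Sym2 (Fin 27))) := by
  intro l₁ hl₁ l₂ hl₂ e he₁ he₂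
  have h₁ : encMask l₁ ∈ M := hM ▸ List.mem_map_of_mem (f := encMask) hl₁
  have h₂ : encMask l₂ ∈ M := hM ▸ List.mem_map_of_mem (f := encMask) hl₂
  have hmeq : encMask l₁ = encMask l₂ := by
    by_contra hne
    have hdisj : encMask l₁ &&& encMask l₂ = 0 := by
      have hsymm : Symmetric (fun a b : ℕ => a &&& b = 0) := by
        intro a b hab
        rwa [Nat.land_comm]
      exact (haveI : Std.Symm (fun a b : ℕ => a &&& b = 0) := ⟨fun a b hab => hsymm hab⟩; List.Pairwise.forall h h₁ h₂ hne)
    have hb : ((encMask l₁ &&& encMask l₂).testBit (enc e)) = true := by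
      rw [mem_encMask] at he₁ he₂
      rw [Nat.testBit_and, he₁, he₂]
      rfl
    rw [hdisj] at hb
    simp [Nat.zero_testBit] at hb
  ext x
  simp only [Set.mem_setOf_eq, mem_encMask, hmeq]

lemma orthlist_transfer (L₁ L₂ : List (List (Sym2 (Fin 27)))) (M₁ M₂ : List ℕ)
    (hM₁ : L₁.map encMask = M₁) (hM₂ : L₂.map encMask = M₂)
    (h : ∀ m₁ ∈ M₁, ∀ m₂ ∈ M₂, (m₁ &&& m₂) &&& ((m₁ &&& m₂) - 1) = 0) :
    ∀ l₁ ∈ L₁, ∀ l₂ ∈ L₂, ∀ e₁ ∈ l₁, e₁ ∈ l₂ → ∀ e₂ ∈ l₁, e₂ ∈ l₂ → e₁ = e₂ := by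
  intro l₁ hl₁ l₂ hl₂ e₁ he₁ he₁' e₂ he₂ he₂'
  have h₁ : encMask l₁ ∈ M₁ := hM₁ ▸ List.mem_map_of_mem (f := encMask) hl₁
  have h₂ : encMask l₂ ∈ M₂ := hM₂ ▸ List.mem_map_of_mem (f := encMask) hl₂
  rw [mem_encMask] at he₁ he₁' he₂ he₂'
  have hb₁ : ((encMask l₁ &&& encMask l₂).testBit (enc e₁)) = true := by
    rw [Nat.testBit_and, he₁, he₁']
    rfl
  have hb₂ : ((encMask l₁ &&& encMask l₂).testBit (enc e₂)) = true := by
    rw [Nat.testBit_and, he₂, he₂']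
    rfl
  exact enc_inj (and_pred_unique (h _ h₁ _ h₂) hb₁ hb₂)

lemma diag_transfer (L : List (List (Sym2 (Fin 27)))) (M : List ℕ) (full : ℕ)
    (hM : L.map encMask = M) (hfold : M.foldr (· ||| ·) 0 = full)
    (h : ∀ x : Fin 27, full.testBit (28 * x.val) = false) :
    ∀ l ∈ L, ∀ e ∈ l, ¬ e.IsDiag := by
  intro l hl e he hd
  have hm : encMask l ∈ M := hM ▸ List.mem_map_of_mem (f := encMask) hl
  have hbit : full.testBit (enc e) = true := by
    rw [← hfold]
    exact (testBit_foldr_or M _).mpr ⟨_, hm, mem_encMask.mp he⟩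
  induction e using Sym2.ind with
  | _ x y =>
    rw [Sym2.mk_isDiag_iff] at hd
    subst hd
    rw [enc_mk, if_pos (le_refl _)] at hbit
    have := h x
    rw [show 28 * x.val = 27 * x.val + x.val by ring] at this
    rw [this] at hbit
    exact Bool.false_ne_true hbit

def L₁ : List (List (Sym2 (Fin 27))) :=
  [[s(0,21), s(21,12), s(12,19), s(19,6), s(6,3), s(3,25), s(25,15), s(15,11), s(11,0)],
  [s(1,22), s(22,13), s(13,20), s(20,7), s(7,4), s(4,26), s(26,16), s(16,12), s(12,1)],
  [s(2,23), s(23,14), s(14,21), s(21,8), s(8,5), s(5,0), s(0,17), s(17,13), s(13,2)],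
  [s(3,24), s(24,15), s(15,22), s(22,9), s(9,6), s(6,1), s(1,18), s(18,14), s(14,3)],
  [s(4,25), s(25,16), s(16,23), s(23,10), s(10,7), s(7,2), s(2,19), s(19,15), s(15,4)],
  [s(5,26), s(26,17), s(17,24), s(24,11), s(11,8), s(8,3), s(3,20), s(20,16), s(16,5)],
  [s(6,0), s(0,18), s(18,25), s(25,12), s(12,9), s(9,4), s(4,21), s(21,17), s(17,6)],
  [s(7,1), s(1,19), s(19,26), s(26,13), s(13,10), s(10,5), s(5,22), s(22,18), s(18,7)],
  [s(8,2), s(2,20), s(20,0), s(0,14), s(14,11), s(11,6), s(6,23), s(23,19), s(19,8)],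
  [s(9,3), s(3,21), s(21,1), s(1,15), s(15,12), s(12,7), s(7,24), s(24,20), s(20,9)],
  [s(10,4), s(4,22), s(22,2), s(2,16), s(16,13), s(13,8), s(8,25), s(25,21), s(21,10)],
  [s(11,5), s(5,23), s(23,3), s(3,17), s(17,14), s(14,9), s(9,26), s(26,22), s(22,11)],
  [s(12,6), s(6,24), s(24,4), s(4,18), s(18,15), s(15,10), s(10,0), s(0,23), s(23,12)],
  [s(13,7), s(7,25), s(25,5), s(5,19), s(19,16), s(16,11), s(11,1), s(1,24), s(24,13)],
  [s(14,8), s(8,26), s(26,6), s(6,20), s(20,17), s(17,12), s(12,2), s(2,25), s(25,14)],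
  [s(15,9), s(9,0), s(0,7), s(7,21), s(21,18), s(18,13), s(13,3), s(3,26), s(26,15)],
  [s(16,10), s(10,1), s(1,8), s(8,22), s(22,19), s(19,14), s(14,4), s(4,0), s(0,16)],
  [s(17,11), s(11,2), s(2,9), s(9,23), s(23,20), s(20,15), s(15,5), s(5,1), s(1,17)],
  [s(18,12), s(12,3), s(3,10), s(10,24), s(24,21), s(21,16), s(16,6), s(6,2), s(2,18)],
  [s(19,13), s(13,4), s(4,11), s(11,25), s(25,22), s(22,17), s(17,7), s(7,3), s(3,19)],
  [s(20,14), s(14,5), s(5,12), s(12,26), s(26,23), s(23,18), s(18,8), s(8,4), s(4,20)],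
  [s(21,15), s(15,6), s(6,13), s(13,0), s(0,24), s(24,19), s(19,9), s(9,5), s(5,21)],
  [s(22,16), s(16,7), s(7,14), s(14,1), s(1,25), s(25,20), s(20,10), s(10,6), s(6,22)],
  [s(23,17), s(17,8), s(8,15), s(15,2), s(2,26), s(26,21), s(21,11), s(11,7), s(7,23)],
  [s(24,18), s(18,9), s(9,16), s(16,3), s(3,0), s(0,22), s(22,12), s(12,8), s(8,24)],
  [s(25,19), s(19,10), s(10,17), s(17,4), s(4,1), s(1,23), s(23,13), s(13,9), s(9,25)],
  [s(26,20), s(20,11), s(11,18), s(18,5), s(5,2), s(2,24), s(24,14), s(14,10), s(10,26)],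
  [s(0,8), s(8,7), s(7,9), s(9,17), s(17,16), s(16,18), s(18,26), s(26,25), s(25,0)],
  [s(1,9), s(9,8), s(8,10), s(10,18), s(18,17), s(17,19), s(19,0), s(0,26), s(26,1)],
  [s(2,10), s(10,9), s(9,11), s(11,19), s(19,18), s(18,20), s(20,1), s(1,0), s(0,2)],
  [s(3,11), s(11,10), s(10,12), s(12,20), s(20,19), s(19,21), s(21,2), s(2,1), s(1,3)],
  [s(4,12), s(12,11), s(11,13), s(13,21), s(21,20), s(20,22), s(22,3), s(3,2), s(2,4)],
  [s(5,13), s(13,12), s(12,14), s(14,22), s(22,21), s(21,23), s(23,4), s(4,3), s(3,5)],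
  [s(6,14), s(14,13), s(13,15), s(15,23), s(23,22), s(22,24), s(24,5), s(5,4), s(4,6)],
  [s(7,15), s(15,14), s(14,16), s(16,24), s(24,23), s(23,25), s(25,6), s(6,5), s(5,7)],
  [s(8,16), s(16,15), s(15,17), s(17,25), s(25,24), s(24,26), s(26,7), s(7,6), s(6,8)],
  [s(0,12), s(12,24), s(24,9), s(9,21), s(21,6), s(6,18), s(18,3), s(3,15), s(15,0)],
  [s(1,13), s(13,25), s(25,10), s(10,22), s(22,7), s(7,19), s(19,4), s(4,16), s(16,1)],
  [s(2,14), s(14,26), s(26,11), s(11,23), s(23,8), s(8,20), s(20,5), s(5,17), s(17,2)]]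

def L₂ : List (List (Sym2 (Fin 27))) :=
  [[s(0,24), s(24,6), s(6,14), s(14,3), s(3,15), s(15,17), s(17,21), s(21,1), s(1,0)],
  [s(5,2), s(2,11), s(11,19), s(19,8), s(8,20), s(20,22), s(22,26), s(26,6), s(6,5)],
  [s(10,7), s(7,16), s(16,24), s(24,13), s(13,25), s(25,0), s(0,4), s(4,11), s(11,10)],
  [s(15,12), s(12,21), s(21,2), s(2,18), s(18,3), s(3,5), s(5,9), s(9,16), s(16,15)],
  [s(20,17), s(17,26), s(26,7), s(7,23), s(23,8), s(8,10), s(10,14), s(14,21), s(21,20)],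
  [s(25,22), s(22,4), s(4,12), s(12,1), s(1,13), s(13,15), s(15,19), s(19,26), s(26,25)],
  [s(3,0), s(0,9), s(9,17), s(17,6), s(6,18), s(18,20), s(20,24), s(24,4), s(4,3)],
  [s(8,5), s(5,14), s(14,22), s(22,11), s(11,23), s(23,25), s(25,2), s(2,9), s(9,8)],
  [s(13,10), s(10,19), s(19,0), s(0,16), s(16,1), s(1,3), s(3,7), s(7,14), s(14,13)],
  [s(18,15), s(15,24), s(24,5), s(5,21), s(21,6), s(6,8), s(8,12), s(12,19), s(19,18)],
  [s(23,20), s(20,2), s(2,10), s(10,26), s(26,11), s(11,13), s(13,17), s(17,24), s(24,23)],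
  [s(1,25), s(25,7), s(7,15), s(15,4), s(4,16), s(16,18), s(18,22), s(22,2), s(2,1)],
  [s(6,3), s(3,12), s(12,20), s(20,9), s(9,21), s(21,23), s(23,0), s(0,7), s(7,6)],
  [s(11,8), s(8,17), s(17,25), s(25,14), s(14,26), s(26,1), s(1,5), s(5,12), s(12,11)],
  [s(16,13), s(13,22), s(22,3), s(3,19), s(19,4), s(4,6), s(6,10), s(10,17), s(17,16)],
  [s(21,18), s(18,0), s(0,8), s(8,24), s(24,9), s(9,11), s(11,15), s(15,22), s(22,21)],
  [s(26,23), s(23,5), s(5,13), s(13,2), s(2,14), s(14,16), s(16,20), s(20,0), s(0,26)],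
  [s(4,1), s(1,10), s(10,18), s(18,7), s(7,19), s(19,21), s(21,25), s(25,5), s(5,4)],
  [s(9,6), s(6,15), s(15,23), s(23,12), s(12,24), s(24,26), s(26,3), s(3,10), s(10,9)],
  [s(14,11), s(11,20), s(20,1), s(1,17), s(17,2), s(2,4), s(4,8), s(8,15), s(15,14)],
  [s(19,16), s(16,25), s(25,6), s(6,22), s(22,7), s(7,9), s(9,13), s(13,20), s(20,19)],
  [s(24,21), s(21,3), s(3,11), s(11,0), s(0,12), s(12,14), s(14,18), s(18,25), s(25,24)],
  [s(2,26), s(26,8), s(8,16), s(16,5), s(5,17), s(17,19), s(19,23), s(23,3), s(3,2)],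
  [s(7,4), s(4,13), s(13,21), s(21,10), s(10,22), s(22,24), s(24,1), s(1,8), s(8,7)],
  [s(12,9), s(9,18), s(18,26), s(26,15), s(15,0), s(0,2), s(2,6), s(6,13), s(13,12)],
  [s(17,14), s(14,23), s(23,4), s(4,20), s(20,5), s(5,7), s(7,11), s(11,18), s(18,17)],
  [s(22,19), s(19,1), s(1,9), s(9,25), s(25,10), s(10,12), s(12,16), s(16,23), s(23,22)],
  [s(0,13), s(13,8), s(8,18), s(18,4), s(4,26), s(26,9), s(9,22), s(22,17), s(17,0)],
  [s(5,18), s(18,13), s(13,23), s(23,9), s(9,4), s(4,14), s(14,0), s(0,22), s(22,5)],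
  [s(10,23), s(23,18), s(18,1), s(1,14), s(14,9), s(9,19), s(19,5), s(5,0), s(0,10)],
  [s(15,1), s(1,23), s(23,6), s(6,19), s(19,14), s(14,24), s(24,10), s(10,5), s(5,15)],
  [s(20,6), s(6,1), s(1,11), s(11,24), s(24,19), s(19,2), s(2,15), s(15,10), s(10,20)],
  [s(25,11), s(11,6), s(6,16), s(16,2), s(2,24), s(24,7), s(7,20), s(20,15), s(15,25)],
  [s(3,16), s(16,11), s(11,21), s(21,7), s(7,2), s(2,12), s(12,25), s(25,20), s(20,3)],
  [s(8,21), s(21,16), s(16,26), s(26,12), s(12,7), s(7,17), s(17,3), s(3,25), s(25,8)],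
  [s(13,26), s(26,21), s(21,4), s(4,17), s(17,12), s(12,22), s(22,8), s(8,3), s(3,13)],
  [s(0,6), s(6,12), s(12,18), s(18,24), s(24,3), s(3,9), s(9,15), s(15,21), s(21,0)],
  [s(5,11), s(11,17), s(17,23), s(23,2), s(2,8), s(8,14), s(14,20), s(20,26), s(26,5)],
  [s(10,16), s(16,22), s(22,1), s(1,7), s(7,13), s(13,19), s(19,25), s(25,4), s(4,10)]]

def M₁ : List ℕ :=
  [2772669694120814859578414273732873398892304856739562807263804245205254144861486550576945104978162481043468605505960297788191279104,
  744282853678701455922507603326392693021925749109899215408499404856408209971783199041989322341780915640994850940676563254668917421505511424,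
  6455624695818498375329899236347236718602334761081454370480275576293883455941952512190530845525731893668461647282282037280,
  1732918558986899904616940651942922262897961414255551257083065713328111395506633932140210706400765400610637015106730539397865799680,
  465176783592511373922204969229235623613566153706093802226465974635196860071619630599130516908771579061939025600654101012392071363905454080,
  124869942024269108843993599440515833156151998256261379779435209169683502783093408198429153509921809225331654581307257503531527327354502506851860480,
  6703903968093047100103004730484520293532849216045941580834746908475844385109854166735719709796053743729128809059635162888721481912672001392624436380958784,
  1799565518655266548745627721797769305935744230288534845200736147021303552502003313341202951787291353698435832342660096143668228254223860872261775616665660900245504,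
  224945689727159819140526925384299092943484855915095831655037778630596050883253926543456712137178376038294438290254248613276143911053319494239993888208521857613824,
  60383398797144661635864873295812302254670739526663046854019300803931106470645470535483306338804211925179041004708259582442149344685221258750002132818467587934533917343744,
  16209045190941378744189093217543598246142368094697019140608036444104413158032267497527025517444599122856073753741559807979227952960678545053450812524097912188426710249634229387264,
  4351082437154956072465106588077822995084026820419845514849846380137786657688791788412645967098876920281070180455247313206176494080946295310839613233476734046948281888440438198778812432384,
  21661481985318866090456647500944840192036178169390030977717240716956393453080589793866495059447302947653031845322948122073105408,
  5814709794364855124394667420147388607796359055397458207357653350917956408693102726065498604404483874723385733181787046413037715532546048,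
  1560874275157996115690819272895607848143020798175345955132994232343589647155655394326235203740681237356018923150547336698776943514177281235877888,
  418993997810706159361693826533320933113450541175682959423880847404521433713969868690634108547303986760777793794543018544034403356945964018633154093908608,
  112472844863579909570263462692149546471742750738782676691092596305192439893395818780302567907786987017800377952640263706658506560199590862245663387301222276988944,
  30191699398572330817932436647906151127335456409259464702474012227408247770536298002783883634297765810989324572689335592057126444766168624120347835392708211280885489598464,
  8104522595470689372094546608771799123071207306187687029724515800413908688444894518929181072823658005254129152801866945990884715250465287988638170072254567770128840484146940739584,
  2175541218577478036232553294038911497542019653707023389409385953263312567525067191060655352989987844228442555015262831298390510381688803793401410002351207847457438474113244808435208290304,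
  583992399055640987986069965529637289586334924903806913938774089044231997134122202863006143338708350399918945425327165079434528720381368096376237285024107550683015937390533065791937783862734618624,
  449891379454319638281053850768598359178825594381120386960962066203915222844465998027850710476551110635932372194962075239778699631328791018450394963081273853091840,
  120766797594289323271729746591624651027019833972167088864762306440150171829595847257101206166696974690862956315316365569696304574622775902966436185294824911815585080279040,
  32418090381882757488378186435087208979278937453362963807604992060873448083555915554166311515507314414962256712010028375964127300003750877498607050094516819643376368931500709642240,
  3351951982485649274893506249551461531869841455148241688094389740399916683828974809971039431595550453713101253147524824698081873207773957816473366441230344,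
  899782758908639276562107701537196371773939423660421805141827281005973257385638679127089316614332393613483228062827261589149669959862985111389792432506764592676864,
  241533595188578646543459493183249209018682958106662516415589550850078570070119286682717902658096692215206858073397032613914676307925322105897129725365302576519868248489984,
  10520271803096747014481979765760257331100679605646347719009969614067406905698096701571312560025952211121886358296201845033884536892131948571569136627278432405084361632604937196140934713218766219557022919670366464,
  1170655706368497086768098961172437364655724303499364181572681183095924188699729249473264513327677947426254564672009770429221393820639530068738048,
  314245498358029619521266210895449518612797636420134219790529470526973901335041868158893519443733307238510670439812433161623360572781102808383752400535558,
  84354633647684932177697597019112159853806820968160936870675002902346799504970972658324462347323416670957712580376771050209888495606916520551373198628857155944448,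
  22643774548929248113449327485929613345501527322498642570266857431892786595257457312300859246158591733546535533230375188670690314027396632948141236000115845414811009548288,
  6078391946603017029070909956578849342303388035511382177730595916417129112808622991028015560934397820312394763082898916821902788280727411658298917038094713016750302501915043299328,
  1631655913933108527174414970529183623156510057657442068069385559975169939607658153328689265874520864980963750680169936538993545759808518760195185979427123659840503090239505521314856173568,
  437994299291730740989552474147227967189749936695861753335788552431750091416074177480904620967332247172679435733301727072335794237091066206077549397392326558397674334297850813828671136526141227008,
  117573199455776218486748409633639350508533562782924783069651921191596744667315557561911563221872992873302915072891543492250003911155712470554616943851534390604390339266740023030070442407432976192291995648,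
  573374653997517877902705490610495337975655503199633533411204696780500613781938155173059140199823660060672,
  153914086704665934422965072005732034435369201900303086574127968289615414168834453247678889214507595307975475986432,
  41315998049390537434494725975931513277466034240463925582733518970176453767039937446051363567869828161959857333234923732992]

def M₂ : List ℕ :=
  [3121748550315992242212338222452599350976778549473891867407739285312155235579451481896170684854712647880731943547308395497308240469533867959648258,
  4351082437154956087560956287363988404050245144372921078517531261803467675884926773501715868258852906289105168011655428761102008193698607244218289291388900088152039569990334947145912680448,
  186070713419675363980627125690459217793433822783454014096386414580799087479482477514512804953768269522968376072769727778845855575999250448,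
  5415370496329716522614162995108581136911134279718436559532780413929980935797816297930858240233817350258757334240617187342548992,
  7547924849643082704483210618804423051581362342744140259596392884225712895932702132741688830108856337888148794222154793850826804355168587051712432024419548708436592033792,
  10520271803096747014481981941301475908578715838201441323425876626703998733919993461937393984226116591489211946475771458288582646916453503405447771320988626749382230859760984595918135766564377476684923963464220672,
  60383398797144661845361872201165381935514880123629392595884391750686133125205029191530590574594385220989839036127225634935394962733693036752412171155725285733751322575368,
  291996199527820493993034982764818644793166624463907835557068321145553610703937602614465328513967691961816673568404871453245859923246752626786881070792972771498398338295172819599171368027267530752,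
  75153362648762663292464389285082742255138719685270639596818837062791331612957250434421094812312521414015516672,
  104748499452676539840423478294812218597228425136848876381095897528463080305048712070083006127464102767545672731693756544330370433159690766340871759593472,
  145998099763910246996517521574108720968914130164415539673087815845997621460039448708886827613480622095636290405619589526023841259516152242468366989987994437300651061255650381077360272530600886272,
  837987995621412321630731459570292945164755595339042723522288032981882493005557482772674322442807083382831712879887986717948284302996977953191969735835648,
  4052261297735344686047273304385899561535592023674254785152009111026028136181254027593308782356325170062825624223213797542945401364927091408625351870345276554508084064442808008832,
  49947976805055875702105617650687734977783722024699667528993915150201851891938769495617991415603844347728918504673431059310354395253501449667084288,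
  1453677448591213781098667155650297746999738761853450069465253057361163184572193541739301788188522307037421243010224488405734566869860352,
  2026130648867672343023637071186947591473955373525755170220461141100643263358019995191800327792317233605527560047759726508440642760380149301873794892403435848058521912768570065152,
  583992399055640987986069965529637289586333248927815671114148271710695951112999842308028155867886571170499759774920989631968001050333849482995507325195608998067217946830002106187885423762873516032,
  16209045190941378800425515649333553031274099440771792376479250422878070458341117104521825418840545811836068213029412287328772277361521896884658520264137164086669830866122003447808,
  78382132970517478991165606422426233672355708521949855379734648809861125861757971353360792655836719761037793357737908861173435088608867041890734235056079927512756361209906978427909303398543380051407142912,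
  20173827172553973356687139701502699914988630561971800623583720676340091734371395028870024681962346100281020008923922432,
  28118211215894977392566243629174020333518692637771890534447107032782259940850370126745435707676620550036984660558979190330307201874139111681701362223996030943232,
  39191066485258739495582811315735712306867226355528240365631418774664397291541075192158646822818057952408537069245321520747924770848652360608606678698169539680265750213567110135846345747129535215664371712,
  224945689727159819920964062963297150788884163363387408092187314296834666748363633422294976084425953347900453418173804943554391081292635943487033051577241711935488,
  1087770609288739018116276647019455748771006705104961378712461595034426490604645023548846425540624901510092145086843041528932228398497226189028028662476587189355486401525038553771269947392,
  13407807929942597099574030543545234369109084977420761943859061088821441101390745631716783068966472250333142643291226180932225638044216199984528244793704452,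
  390218568789499028922704898919210652251647506419006274570136880608137996141048938297044508634001399455762180431536423207560071472673456245440512,
  543885304644369509058138435982572737965412922816036416862487106941631516292838188666428728451880149899558314701987763963728551788315744111196573786392787237840336044340023327907026829312,
  6243497100631984462763194459586332611497196285329942301718313920258597822389601108887885135265771860206430401905984209996815128922025354529480704,
  39680975478546686218420664163352756985638911358139086272159037151619951123014215486006774351095935652144038821888,
  1675975991242824637446753124775730765934920727574049172215445180481134847331948822538869388109516880355042003853104785598104456771254136884187106218345504,
  10651780747108497932330666584512455810297166621765644934890351242316042718404033028468490092025541586529942438835208060928,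
  449891379454319638281053850768598185886969711830191663310075557265455732141042065546884481921619141717803142203461940137809402589023891926393185047042010931789824,
  2859315622062090323940239627397563613116969417621640423231381745731273423230266198236000119484358219427128556222481184690083463168,
  120766797594289323271729746591624604509341479053326093708038601609006722505094483180259825283953590565347109795619150679537569825072209024156073063395103655631986301599744,
  767541692856160876420085941129735081776061266957319482478148952425450434825497499924867087689838183499269312760203374263702773113561284608,
  32418090381882757488378186435087196492284736189394038281216072888516053262720499915577376398578411566246249216269093514994377425125098662326650487941781557966839211055680810123264,
  3351951982485649274893506422843317414420770178798993812352590536924600448276508134489504114319240817336228998958868342740199123046247605040607358697340992,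
  241533595188578646543459505670243410282651883633041752151211947937259931032808505520544795559342745923478999986520741694482141023498890113642642770558799382895040514752512,
  899782758908639276562107748054874726692780418817109436360046073560639958950908875169399364141161538375463336655947348827429641125719584947983334848876295175012352]

def full₁ : ℕ :=
  10520271920669947492244904758160028415955696080231752183720376228976248656630266692547247248764118222434544083176989619624250474585231860899248627408514383765407317479625203916339635781488415792896707363908616190

def full₂ : ℕ :=
  10520271920669947492244904758160028415955696080231752183720376228976248656630266692547247248764118222434544083176989619624250474585231860899248627408514383765407317479625203916339635781488415792896707363908616190

set_option maxRecDepth 1000000 in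
set_option maxHeartbeats 1000000 in
lemma hM₁ : L₁.map encMask = M₁ := by decide

set_option maxRecDepth 1000000 in
set_option maxHeartbeats 1000000 in
lemma hM₂ : L₂.map encMask = M₂ := by decide

set_option maxRecDepth 1000000 in
set_option maxHeartbeats 1000000 in
lemma hfull₁ : M₁.foldr (· ||| ·) 0 = full₁ := by decide

set_option maxRecDepth 1000000 in
set_option maxHeartbeats 1000000 in
lemma hfull₂ : M₂.foldr (· ||| ·) 0 = full₂ := by decide

set_option maxRecDepth 1000000 in
set_option maxHeartbeats 1000000 in
lemma hcov₁ : ∀ a b : Fin 27, a.val < b.val → full₁.testBit (27 * a.val + b.val) = true := by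
  decide

set_option maxRecDepth 1000000 in
set_option maxHeartbeats 1000000 in
lemma hcov₂ : ∀ a b : Fin 27, a.val < b.val → full₂.testBit (27 * a.val + b.val) = true := by
  decide

set_option maxRecDepth 1000000 in
set_option maxHeartbeats 1000000 in
lemma hdisj₁ : M₁.Pairwise (fun a b => a &&& b = 0) := by decide

set_option maxRecDepth 1000000 in
set_option maxHeartbeats 1000000 in
lemma hdisj₂ : M₂.Pairwise (fun a b => a &&& b = 0) := by decide

set_option maxRecDepth 1000000 in
set_option maxHeartbeats 1000000 in
lemma horth : ∀ m₁ ∈ M₁, ∀ m₂ ∈ M₂, (m₁ &&& m₂) &&& ((m₁ &&& m₂) - 1) = 0 := by decide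

set_option maxRecDepth 1000000 in
set_option maxHeartbeats 1000000 in
lemma L₁cyc : ∀ l ∈ L₁, IsCycleEdgeSet 9 {e | e ∈ l} := by
  intro l hl
  fin_cases hl <;>
    exact nineCycle _ _ _ _ _ _ _ _ _ (by decide) (by decide)

set_option maxRecDepth 1000000 in
set_option maxHeartbeats 1000000 in
lemma L₂cyc : ∀ l ∈ L₂, IsCycleEdgeSet 9 {e | e ∈ l} := by
  intro l hl
  fin_cases hl <;>
    exact nineCycle _ _ _ _ _ _ _ _ _ (by decide) (by decide)

set_option maxRecDepth 1000000 in
set_option maxHeartbeats 1000000 in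
lemma hnd₁ : ∀ x : Fin 27, full₁.testBit (28 * x.val) = false := by decide

lemma L₁diag : ∀ l ∈ L₁, ∀ e ∈ l, ¬ e.IsDiag :=
  diag_transfer L₁ M₁ full₁ hM₁ hfull₁ hnd₁

set_option maxRecDepth 1000000 in
set_option maxHeartbeats 1000000 in
lemma hnd₂ : ∀ x : Fin 27, full₂.testBit (28 * x.val) = false := by decide

lemma L₂diag : ∀ l ∈ L₂, ∀ e ∈ l, ¬ e.IsDiag :=
  diag_transfer L₂ M₂ full₂ hM₂ hfull₂ hnd₂

theorem orthogonal_nine_cycle_systems_order_27 :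
    ∃ D₁ D₂ : Set (Set (Sym2 (Fin 27))),
      IsCycleDecomposition (⊤ : SimpleGraph (Fin 27)) 9 D₁ ∧
      IsCycleDecomposition (⊤ : SimpleGraph (Fin 27)) 9 D₂ ∧
      OrthogonalDecompositions D₁ D₂ := by
  refine ⟨Dof L₁, Dof L₂,
    dec_of L₁ L₁cyc L₁diag (cov_transfer L₁ M₁ full₁ hM₁ hfull₁ hcov₁)
      (uniq_transfer L₁ M₁ hM₁ hdisj₁),
    dec_of L₂ L₂cyc L₂diag (cov_transfer L₂ M₂ full₂ hM₂ hfull₂ hcov₂)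
      (uniq_transfer L₂ M₂ hM₂ hdisj₂),
    orth_of L₁ L₂ (orthlist_transfer L₁ L₂ M₁ M₂ hM₁ hM₂ horth)⟩
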